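/- There is an absolute constant K > 0 such that for every integer τ ≥ 1 and every real x with |x| ≤ 1/2, arcsin(x) ≥ Σ_{k=0}^{τ} c_k x^{2k+1} − K · τ^{−1/2} · 4^{−τ}. -/

import Mathlib

/-- Taylor coefficients of `arcsin`: `c_k = (2k)! / (4^k (k!)^2 (2k+1))`. -/
noncomputable def arcsinCoeff (k : ℕ) : ℝ :=
  (Nat.factorial (2 * k) : ℝ) / (4 ^ k * (Nat.factorial k : ℝ) ^ 2 * (2 * k + 1))


noncomputable def aC (k : ℕ) : ℝ :=
  (Nat.factorial (2 * k) : ℝ) / (4 ^ k * (Nat.factorial k : ℝ) ^ 2)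

lemma aC_pos (k : ℕ) : 0 < aC k := by
  unfold aC
  positivity

lemma aC_zero : aC 0 = 1 := by simp [aC]

lemma aC_rec (k : ℕ) : (2 * (k : ℝ) + 2) * aC (k + 1) = (2 * k + 1) * aC k := by
  have h1 : 2 * (k + 1) = (2 * k + 1) + 1 := by omega
  have hf : ((k+1).factorial : ℝ) = (k+1) * k.factorial := by
    rw [Nat.factorial_succ]; push_cast; ring
  unfold aC
  rw [h1, Nat.factorial_succ, Nat.factorial_succ, hf]
  have h2 : ((2 * k).factorial : ℝ) ≠ 0 := by positivity
  have h3 : ((k).factorial : ℝ) ≠ 0 := by positivity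
  push_cast
  field_simp
  ring

lemma aC_sq (k : ℕ) : (aC k) ^ 2 * (2 * k + 1) ≤ 1 := by
  induction k with
  | zero => simp [aC_zero]
  | succ n ih =>
    have hrec := aC_rec n
    have h1 := aC_pos n
    have h2 := aC_pos (n + 1)
    have hn : (0:ℝ) ≤ (n:ℝ) := Nat.cast_nonneg n
    have hsq : ((2 * (n:ℝ) + 2) * aC (n+1)) ^ 2 = ((2 * (n:ℝ) + 1) * aC n) ^ 2 := by
      rw [hrec]
    push_cast
    nlinarith [hsq, ih, sq_nonneg (aC n), sq_nonneg (aC (n+1)), mul_pos h1 h2]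

noncomputable def qf (n : ℕ) (t : ℝ) : ℝ := ∑ k ∈ Finset.range (n+1), aC k * t ^ (2*k)
noncomputable def Df (n : ℕ) (t : ℝ) : ℝ := ∑ k ∈ Finset.range n, (2*(k:ℝ)+1) * aC k * t ^ (2*k+1)

lemma hasDerivAt_qf (n : ℕ) (t : ℝ) : HasDerivAt (fun x => qf n x) (Df n t) t := by
  have hsum : HasDerivAt (fun x => qf n x)
      (∑ k ∈ Finset.range (n+1), aC k * ((2*k) * t ^ (2*k-1))) t := by
    apply HasDerivAt.fun_sum
    intro k _
    have h := (hasDerivAt_pow (2*k) t).const_mul (aC k)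
    push_cast at h
    exact h
  convert hsum using 1
  rw [Finset.sum_range_succ']
  simp only [Nat.mul_zero, Nat.cast_zero, zero_mul, mul_zero, add_zero, Df]
  apply Finset.sum_congr rfl
  intro k _
  have he : 2*(k+1)-1 = 2*k+1 := by omega
  rw [he]
  have := aC_rec k
  push_cast
  linear_combination (-t ^ (2*k+1)) * (aC_rec k)

lemma qf_id (n : ℕ) (t : ℝ) :
    (1 - t^2) * Df n t = t * qf n t - (2*(n:ℝ)+1) * aC n * t ^ (2*n+1) := by
  induction n with
  | zero => simp [Df, qf, aC_zero]
  | succ n ih =>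
    rw [Df, Finset.sum_range_succ, qf, Finset.sum_range_succ, ← qf, ← Df]
    push_cast
    linear_combination ih + t ^ (2*n+3) * (aC_rec n)



lemma arcsinCoeff_eq (k : ℕ) : arcsinCoeff k * (2*(k:ℝ)+1) = aC k := by
  unfold arcsinCoeff aC
  have h : (2*(k:ℝ)+1) ≠ 0 := by positivity
  field_simp

lemma aC_le (k : ℕ) (hk : 1 ≤ k) : aC k ≤ (Real.sqrt k)⁻¹ := by
  have hkpos : (0:ℝ) < k := by exact_mod_cast hk
  have hs : 0 < Real.sqrt k := Real.sqrt_pos.mpr hkpos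
  have h2 : Real.sqrt k ^ 2 = k := Real.sq_sqrt hkpos.le
  have h1 : (aC k * Real.sqrt k) ^ 2 ≤ 1 := by
    have h3 := aC_sq k
    nlinarith [sq_nonneg (aC k)]
  have h3 : aC k * Real.sqrt k ≤ 1 := by nlinarith [mul_pos (aC_pos k) hs]
  rw [← one_div, le_div_iff₀ hs]
  exact h3

lemma mono_aux {f f' : ℝ → ℝ} (hd : ∀ t ∈ Set.Icc (0:ℝ) (1/2), HasDerivAt f (f' t) t)
    (h0 : ∀ t ∈ Set.Icc (0:ℝ) (1/2), 0 ≤ f' t) {x : ℝ} (hx : x ∈ Set.Icc (0:ℝ) (1/2)) :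
    f 0 ≤ f x := by
  have hmono : MonotoneOn f (Set.Icc 0 (1/2)) := by
    apply monotoneOn_of_deriv_nonneg (convex_Icc _ _)
    · intro t ht; exact (hd t ht).continuousAt.continuousWithinAt
    · intro t ht
      exact ((hd t (interior_subset ht)).differentiableAt).differentiableWithinAt
    · intro t ht
      rw [(hd t (interior_subset ht)).deriv]
      exact h0 t (interior_subset ht)
  exact hmono (Set.left_mem_Icc.mpr (by norm_num)) hx hx.1

lemma hasDerivAt_sqrt_one_sub_sq {t : ℝ} (h : t^2 < 1) :
    HasDerivAt (fun x : ℝ => Real.sqrt (1 - x^2)) (-t / Real.sqrt (1 - t^2)) t := by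
  have hpos : 0 < 1 - t^2 := by nlinarith
  have hne : (1:ℝ) - t^2 ≠ 0 := ne_of_gt hpos
  have hi : HasDerivAt (fun x : ℝ => 1 - x^2) (-(2*t)) t := by
    simpa using ((hasDerivAt_pow 2 t).const_sub 1)
  have hc := (Real.hasDerivAt_sqrt hne).comp t hi
  refine hc.congr_deriv (Eq.symm ?_)
  have hs : Real.sqrt (1 - t^2) ≠ 0 := by
    exact ne_of_gt (Real.sqrt_pos.mpr hpos)
  field_simp

lemma hasDerivAt_S (τ : ℕ) (t : ℝ) :
    HasDerivAt (fun y => ∑ k ∈ Finset.range (τ + 1), arcsinCoeff k * y ^ (2 * k + 1))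
      (qf τ t) t := by
  have hterm : ∀ k : ℕ, HasDerivAt (fun y : ℝ => arcsinCoeff k * y ^ (2*k+1))
      (aC k * t ^ (2*k)) t := by
    intro k
    have h := (hasDerivAt_pow (2*k+1) t).const_mul (arcsinCoeff k)
    simp only [Nat.add_sub_cancel] at h
    refine h.congr_deriv (Eq.symm ?_)
    push_cast
    linear_combination t ^ (2*k) * (arcsinCoeff_eq k).symm
  have := HasDerivAt.fun_sum (u := Finset.range (τ+1))
    (A := fun k (y : ℝ) => arcsinCoeff k * y ^ (2*k+1))
    (A' := fun k => aC k * t ^ (2*k)) (fun k _ => hterm k)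
  unfold qf
  exact this

/-- There is an absolute constant `K > 0` such that for every integer `τ ≥ 1` and every
real `x` with `|x| ≤ 1/2`,
`arcsin x ≥ Σ_{k=0}^{τ} c_k x^(2k+1) − K · τ^{-1/2} · 4^{-τ}`. -/
theorem arcsin_ge_taylor_partial_sum_of_abs_le_half :
    ∃ K : ℝ, K > 0 ∧ ∀ τ : ℕ, 1 ≤ τ → ∀ x : ℝ, |x| ≤ 1 / 2 →
      Real.arcsin x ≥
        (∑ k ∈ Finset.range (τ + 1), arcsinCoeff k * x ^ (2 * k + 1)) -
          K * (Real.sqrt τ)⁻¹ * ((4 : ℝ) ^ τ)⁻¹ := by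
  refine ⟨1, one_pos, ?_⟩
  intro τ hτ x hx
  set S : ℝ → ℝ := fun y => ∑ k ∈ Finset.range (τ + 1), arcsinCoeff k * y ^ (2 * k + 1) with hSdef
  set δ : ℝ := aC τ * ((4:ℝ)^τ)⁻¹ with hδdef
  have haCpos := aC_pos τ
  have hδpos : 0 < δ := by
    rw [hδdef]; positivity
  have hsq : ∀ t ∈ Set.Icc (0:ℝ) (1/2), t^2 < 1 := by
    intro t ht; obtain ⟨h1, h2⟩ := ht; nlinarith
  have hsqrt_lb : ∀ t ∈ Set.Icc (0:ℝ) (1/2), (1:ℝ)/2 ≤ Real.sqrt (1 - t^2) := by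
    intro t ht
    obtain ⟨h1, h2⟩ := ht
    have h4 := Real.sq_sqrt (by nlinarith : (0:ℝ) ≤ 1 - t^2)
    have h5 := Real.sqrt_nonneg (1 - t^2)
    nlinarith
  have hsqrt_pos : ∀ t ∈ Set.Icc (0:ℝ) (1/2), 0 < Real.sqrt (1 - t^2) := by
    intro t ht; linarith [hsqrt_lb t ht]
  have hsqrt_sq : ∀ t ∈ Set.Icc (0:ℝ) (1/2),
      Real.sqrt (1 - t^2) * Real.sqrt (1 - t^2) = 1 - t^2 := by
    intro t ht
    exact Real.mul_self_sqrt (by nlinarith [hsq t ht])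
  -- derivative of qf τ · sqrt(1-·^2)
  have hDh : ∀ t ∈ Set.Icc (0:ℝ) (1/2),
      HasDerivAt (fun y => qf τ y * Real.sqrt (1 - y^2))
        (Df τ t * Real.sqrt (1 - t^2) + qf τ t * (-t / Real.sqrt (1 - t^2))) t :=
    fun t ht => (hasDerivAt_qf τ t).mul (hasDerivAt_sqrt_one_sub_sq (hsq t ht))
  have hq0 : qf τ 0 = 1 := by
    unfold qf
    rw [Finset.sum_eq_single 0]
    · simp [aC_zero]
    · intro k _ hk
      have h1 : 2*k ≠ 0 := by omega
      simp [zero_pow h1]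
    · simp
  -- the product of the derivative with sqrt(1-t^2)
  have hprod : ∀ t ∈ Set.Icc (0:ℝ) (1/2),
      (Df τ t * Real.sqrt (1 - t^2) + qf τ t * (-t / Real.sqrt (1 - t^2)))
        * Real.sqrt (1 - t^2) = -((2*(τ:ℝ)+1) * aC τ * t ^ (2*τ+1)) := by
    intro t ht
    have hs := hsqrt_pos t ht
    have h2 := hsqrt_sq t ht
    have hne := ne_of_gt hs
    field_simp
    linear_combination (Df τ t) * h2 + qf_id τ t
  -- (A) qf τ t * sqrt(1-t^2) ≤ 1
  have hA : ∀ t ∈ Set.Icc (0:ℝ) (1/2), qf τ t * Real.sqrt (1 - t^2) ≤ 1 := by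
    intro t ht
    have key := mono_aux (f := fun y => -(qf τ y * Real.sqrt (1 - y^2)))
      (f' := fun s => -(Df τ s * Real.sqrt (1 - s^2) + qf τ s * (-s / Real.sqrt (1 - s^2))))
      (fun s hs => (hDh s hs).neg)
      (fun s hs => by
        have hp := hprod s hs
        have hu := hsqrt_pos s hs
        have h3 : (0:ℝ) ≤ s ^ (2*τ+1) := pow_nonneg hs.1 _
        have h6 : (0:ℝ) ≤ (τ:ℝ) := Nat.cast_nonneg τ
        have hc : (0:ℝ) ≤ (2*(τ:ℝ)+1) * aC τ * s ^ (2*τ+1) :=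
          mul_nonneg (mul_nonneg (by linarith) haCpos.le) h3
        have h9 : Df τ s * Real.sqrt (1-s^2) + qf τ s * (-s/Real.sqrt (1-s^2))
            = (-((2*(τ:ℝ)+1) * aC τ * s ^ (2*τ+1))) / Real.sqrt (1-s^2) := by
          rw [eq_div_iff (ne_of_gt hu)]
          exact hp
        have h10 := div_nonpos_of_nonpos_of_nonneg (by linarith : -((2*(τ:ℝ)+1) * aC τ * s ^ (2*τ+1)) ≤ 0) hu.le
        rw [h9]
        linarith)
      ht
    simp only [neg_le_neg_iff] at key
    calc qf τ t * Real.sqrt (1 - t^2) ≤ qf τ 0 * Real.sqrt (1 - 0^2) := by linarith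
    _ = 1 := by rw [hq0]; norm_num
  -- (B)
  have hB : ∀ t ∈ Set.Icc (0:ℝ) (1/2),
      1 ≤ qf τ t * Real.sqrt (1 - t^2) + 2 * aC τ * t ^ (2*τ+2) := by
    intro t ht
    have key := mono_aux
      (f := fun y => qf τ y * Real.sqrt (1 - y^2) + 2 * aC τ * y ^ (2*τ+2))
      (f' := fun s => (Df τ s * Real.sqrt (1 - s^2) + qf τ s * (-s / Real.sqrt (1 - s^2)))
          + 2 * aC τ * ((2*(τ:ℝ)+2) * s ^ (2*τ+1)))
      (fun s hs => by
        have hp := (hasDerivAt_pow (2*τ+2) s).const_mul (2 * aC τ)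
        simp only [show 2*τ+2-1 = 2*τ+1 by omega] at hp
        push_cast at hp
        exact (hDh s hs).add hp)
      (fun s hs => by
        have hp := hprod s hs
        have hu := hsqrt_pos s hs
        have hl := hsqrt_lb s hs
        have h3 : (0:ℝ) ≤ s ^ (2*τ+1) := pow_nonneg hs.1 _
        have h6 : (0:ℝ) ≤ (τ:ℝ) := Nat.cast_nonneg τ
        nlinarith [mul_nonneg (mul_nonneg (mul_nonneg (by linarith : (0:ℝ) ≤ 2*(τ:ℝ)+2) haCpos.le) h3) (by linarith : (0:ℝ) ≤ Real.sqrt (1 - s^2) - 1/2)])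
      ht
    calc (1:ℝ) = qf τ 0 * Real.sqrt (1 - 0^2) + 2 * aC τ * 0 ^ (2*τ+2) := by
          rw [hq0]
          have : (0:ℝ) ^ (2*τ+2) = 0 := by
            apply zero_pow; omega
          rw [this]; norm_num
    _ ≤ _ := key
  -- deriv gap bounds
  have hC : ∀ t ∈ Set.Icc (0:ℝ) (1/2), 0 ≤ 1 / Real.sqrt (1 - t^2) - qf τ t := by
    intro t ht
    have hs := hsqrt_pos t ht
    have h1 : qf τ t ≤ 1 / Real.sqrt (1 - t^2) := by
      rw [le_div_iff₀ hs]
      exact hA t ht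
    linarith
  have hpow : ∀ t ∈ Set.Icc (0:ℝ) (1/2), t ^ (2*τ+2) ≤ ((1:ℝ)/4)^(τ+1) := by
    intro t ht
    have h1 : t ^ (2*τ+2) ≤ ((1:ℝ)/2) ^ (2*τ+2) := pow_le_pow_left₀ ht.1 ht.2 _
    have h2 : ((1:ℝ)/2) ^ (2*τ+2) = ((1:ℝ)/4)^(τ+1) := by
      rw [show 2*τ+2 = 2*(τ+1) by ring, pow_mul]
      norm_num
    linarith
  have hq4 : ((1:ℝ)/4)^(τ+1) = ((4:ℝ)^τ)⁻¹ / 4 := by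
    rw [one_div, inv_pow, pow_succ]
    field_simp
  have hD : ∀ t ∈ Set.Icc (0:ℝ) (1/2), 1 / Real.sqrt (1 - t^2) - qf τ t ≤ δ := by
    intro t ht
    have hs := hsqrt_pos t ht
    have hl := hsqrt_lb t ht
    have h7 : 1 / Real.sqrt (1 - t^2) - qf τ t
        = (1 - qf τ t * Real.sqrt (1 - t^2)) / Real.sqrt (1 - t^2) := by
      field_simp
    have hnum0 : 0 ≤ 1 - qf τ t * Real.sqrt (1 - t^2) := by linarith [hA t ht]
    have h8 : (1 - qf τ t * Real.sqrt (1 - t^2)) / Real.sqrt (1 - t^2)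
        ≤ (1 - qf τ t * Real.sqrt (1 - t^2)) * 2 := by
      rw [div_le_iff₀ hs]
      nlinarith
    have h9 : 1 - qf τ t * Real.sqrt (1 - t^2) ≤ 2 * aC τ * t ^ (2*τ+2) := by
      linarith [hB t ht]
    have h10 : t ^ (2*τ+2) ≤ ((4:ℝ)^τ)⁻¹ / 4 := by
      rw [← hq4]; exact hpow t ht
    have h11 : (0:ℝ) < ((4:ℝ)^τ)⁻¹ := by positivity
    rw [h7, hδdef]
    nlinarith
  -- F = arcsin − S
  have hDF : ∀ t ∈ Set.Icc (0:ℝ) (1/2),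
      HasDerivAt (fun y => Real.arcsin y - S y) (1 / Real.sqrt (1 - t^2) - qf τ t) t := by
    intro t ht
    have h1 : t ≠ -1 := by
      have : (-1:ℝ) < t := by linarith [ht.1]
      exact this.ne'
    have h2 : t ≠ 1 := by
      have : t < 1 := by linarith [ht.2]
      exact this.ne
    exact (Real.hasDerivAt_arcsin h1 h2).sub (hasDerivAt_S τ t)
  have hS0 : S 0 = 0 := by
    rw [hSdef]
    apply Finset.sum_eq_zero
    intro k _
    have : (0:ℝ) ^ (2*k+1) = 0 := by apply zero_pow; omega
    rw [this, mul_zero]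
  have hF0 : Real.arcsin 0 - S 0 = 0 := by rw [Real.arcsin_zero, hS0]; ring
  have hlow : ∀ y ∈ Set.Icc (0:ℝ) (1/2), 0 ≤ Real.arcsin y - S y := by
    intro y hy
    have := mono_aux (f := fun y => Real.arcsin y - S y)
      (f' := fun t => 1 / Real.sqrt (1 - t^2) - qf τ t) hDF hC hy
    simpa [Real.arcsin_zero, hS0] using this
  have hupper : ∀ y ∈ Set.Icc (0:ℝ) (1/2), Real.arcsin y - S y ≤ δ * y := by
    intro y hy
    have key := mono_aux (f := fun y => δ * y - (Real.arcsin y - S y))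
      (f' := fun t => δ - (1 / Real.sqrt (1 - t^2) - qf τ t))
      (fun t ht => (((hasDerivAt_id t).const_mul δ).sub (hDF t ht)).congr_deriv (by simp))
      (fun t ht => by linarith [hD t ht])
      hy
    simp only [mul_zero, hF0] at key
    linarith
  -- endgame
  have hK : (0:ℝ) ≤ 1 * (Real.sqrt τ)⁻¹ * ((4:ℝ)^τ)⁻¹ := by positivity
  rcases le_or_gt 0 x with hx0 | hx0
  · have hxI : x ∈ Set.Icc (0:ℝ) (1/2) := ⟨hx0, (abs_le.mp hx).2⟩
    have := hlow x hxI
    have hSx : (∑ k ∈ Finset.range (τ + 1), arcsinCoeff k * x ^ (2 * k + 1)) = S x := rfl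
    rw [ge_iff_le, hSx]
    linarith
  · have hyI : -x ∈ Set.Icc (0:ℝ) (1/2) := by
      constructor
      · linarith
      · linarith [(abs_le.mp hx).1]
    have hup := hupper (-x) hyI
    have hodd : S (-x) = - S x := by
      rw [hSdef]
      simp only
      rw [← Finset.sum_neg_distrib]
      apply Finset.sum_congr rfl
      intro k _
      rw [Odd.neg_pow ⟨k, by ring⟩]
      ring
    have harc : Real.arcsin (-x) = - Real.arcsin x := Real.arcsin_neg x
    have hδle : δ ≤ (Real.sqrt τ)⁻¹ * ((4:ℝ)^τ)⁻¹ := by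
      rw [hδdef]
      apply mul_le_mul_of_nonneg_right (aC_le τ hτ) (by positivity)
    rw [harc, hodd] at hup
    have hSx : (∑ k ∈ Finset.range (τ + 1), arcsinCoeff k * x ^ (2 * k + 1)) = S x := rfl
    rw [ge_iff_le, hSx]
    have hb : δ * (-x) ≤ δ * (1/2) := by nlinarith [hyI.2, hδpos]
    linarith
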